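/- arXiv:2602.09627 — 4 statements merged into one kernel-verified Lean document; each statement's English description precedes it below -/
import Mathlib

section
/- Nonadaptive parallel composition (fixed template): let μ be a product distribution on W^n, τ an injective template whose blocks are disjoint with j ∈ τ^k, and F = (F₁,…,F_m) applied blockwise. Then for all v, w ∈ W and ε ≥ 0, the hockey-stick divergence of the joint outputs equals that of the k-th block alone: D_ε(μ_{j,v} K_τ K_F, μ_{j,w} K_τ K_F) = D_ε(μ_{j,v} K_{τ^k} K_{F_k}, μ_{j,w} K_{τ^k} K_{F_k}). -/
/-- Hockey-stick divergence (privacy curve) of two distributions on a finite set. -/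
noncomputable def hsDiv {A : Type*} [Fintype A] (ε : ℝ) (p q : A → ℝ) : ℝ :=
  ∑ a, max 0 (p a - Real.exp ε * q a)

/-- `p` is a probability mass function on a finite set. -/
def IsPMF {A : Type*} [Fintype A] (p : A → ℝ) : Prop :=
  (∀ a, 0 ≤ p a) ∧ ∑ a, p a = 1

/-- Pushforward of a distribution through a Markov kernel. -/
noncomputable def pushKer {X A : Type*} [Fintype X] (μ : X → ℝ) (K : X → A → ℝ) : A → ℝ :=
  fun a => ∑ x, μ x * K x a

noncomputable def condProd {W : Type*} [Fintype W] [DecidableEq W] {n : ℕ}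
    (μi : Fin n → W → ℝ) (j : Fin n) (v : W) : (Fin n → W) → ℝ :=
  fun D => ∏ i, if i = j then (if D i = v then (1 : ℝ) else 0) else μi i (D i)

theorem nonadaptive_fixed_template_hsDiv_eq_critical_block
    {W A : Type*} [Fintype W] [DecidableEq W] [Fintype A]
    {n m : ℕ}
    (μi : Fin n → W → ℝ) (hμi : ∀ i, IsPMF (μi i))
    (τ : Fin m → Finset (Fin n))
    (hdisj : ∀ k l, k ≠ l → Disjoint (τ k) (τ l))
    (G : Fin m → (Fin n → W) → A → ℝ)
    (hG : ∀ k D, IsPMF (G k D))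
    (hdep : ∀ k (D D' : Fin n → W), (∀ i ∈ τ k, D i = D' i) → G k D = G k D')
    (j : Fin n) (k : Fin m) (hj : j ∈ τ k)
    (v w : W) (ε : ℝ) (hε : 0 ≤ ε) :
    hsDiv ε
      (fun a : Fin m → A => ∑ D : Fin n → W, condProd μi j v D * ∏ l, G l D (a l))
      (fun a : Fin m → A => ∑ D : Fin n → W, condProd μi j w D * ∏ l, G l D (a l))
      = hsDiv ε (pushKer (condProd μi j v) (G k)) (pushKer (condProd μi j w) (G k)) := by
  classical
  -- W is nonempty
  have hWne : Nonempty W := by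
    by_contra h
    have h2 := (hμi j).2
    rw [Finset.sum_eq_zero (fun a _ => absurd ⟨a⟩ h)] at h2
    exact zero_ne_one h2
  obtain ⟨w₀⟩ := hWne
  set e : (Fin n → W) ≃ ((i : {i : Fin n // i ∈ τ k}) → W) × ((i : {i : Fin n // ¬ i ∈ τ k}) → W) :=
    Equiv.piEquivPiSubtypeProd (fun i => i ∈ τ k) (fun _ => W) with he
  have hsymm : ∀ (x : (i : {i : Fin n // i ∈ τ k}) → W)
      (y : (i : {i : Fin n // ¬ i ∈ τ k}) → W) (i : Fin n),
      e.symm (x, y) i = if h : i ∈ τ k then x ⟨i, h⟩ else y ⟨i, h⟩ := by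
    intro x y i
    simp [he, Equiv.piEquivPiSubtypeProd]
  -- the two weight factors
  set Px : W → ((i : {i : Fin n // i ∈ τ k}) → W) → ℝ := fun u x =>
    ∏ i : {i : Fin n // i ∈ τ k},
      if (i : Fin n) = j then (if x i = u then (1:ℝ) else 0) else μi i (x i) with hPx
  set Py : ((i : {i : Fin n // ¬ i ∈ τ k}) → W) → ℝ := fun y =>
    ∏ i : {i : Fin n // ¬ i ∈ τ k}, μi i (y i) with hPy
  have hsplit : ∀ (u : W) x y, condProd μi j u (e.symm (x, y)) = Px u x * Py y := by
    intro u x y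
    rw [condProd, ← Fintype.prod_subtype_mul_prod_subtype (fun i : Fin n => i ∈ τ k)]
    congr 1
    · exact Finset.prod_congr (by ext i; simp) fun i _ => by rw [hsymm, dif_pos i.2]
    · refine Finset.prod_congr (by ext i; simp) fun i _ => ?_
      have hij : (i : Fin n) ≠ j := fun hh => i.2 (hh ▸ hj)
      rw [hsymm, dif_neg i.2, if_neg hij]
  -- dependence facts
  have hGk : ∀ x y, G k (e.symm (x, y)) = G k (e.symm (x, fun _ => w₀)) := by
    intro x y
    refine hdep k _ _ fun i hi => ?_
    rw [hsymm, hsymm, dif_pos hi, dif_pos hi]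
  have hGl : ∀ (l : Fin m), l ≠ k → ∀ x y,
      G l (e.symm (x, y)) = G l (e.symm (fun _ => w₀, y)) := by
    intro l hl x y
    refine hdep l _ _ fun i hi => ?_
    have hik : ¬ i ∈ τ k := Finset.disjoint_left.mp (hdisj l k hl) hi
    rw [hsymm, hsymm, dif_neg hik, dif_neg hik]
  set q : W → A → ℝ := fun u b => ∑ x, Px u x * G k (e.symm (x, fun _ => w₀)) b with hqdef
  set r : ({l : Fin m // l ≠ k} → A) → ℝ := fun c =>
    ∑ y, Py y * ∏ l : {l : Fin m // l ≠ k}, G l (e.symm (fun _ => w₀, y)) (c l) with hrdef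
  -- Py sums to 1
  have hPy1 : ∑ y, Py y = 1 := by
    rw [hPy]
    rw [← Fintype.piFinset_univ, ← Finset.prod_univ_sum]
    exact Finset.prod_eq_one fun i _ => (hμi i).2
  -- pushKer equals q
  have hq : ∀ (u : W) (b : A), pushKer (condProd μi j u) (G k) b = q u b := by
    intro u b
    rw [pushKer, ← Equiv.sum_comp e.symm, Fintype.sum_prod_type]
    calc ∑ x, ∑ y, condProd μi j u (e.symm (x, y)) * G k (e.symm (x, y)) b
        = ∑ x, ∑ y, (Px u x * G k (e.symm (x, fun _ => w₀)) b) * Py y := by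
          refine Finset.sum_congr rfl fun x _ => Finset.sum_congr rfl fun y _ => ?_
          rw [hsplit, hGk]; ring
      _ = (∑ x, Px u x * G k (e.symm (x, fun _ => w₀)) b) * ∑ y, Py y := by
          rw [Finset.sum_mul]
          exact Finset.sum_congr rfl fun x _ => (Finset.mul_sum _ _ _).symm
      _ = q u b := by rw [hPy1, mul_one]
  -- factorization of the joint distribution
  have hfac : ∀ (u : W) (a : Fin m → A),
      (∑ D : Fin n → W, condProd μi j u D * ∏ l, G l D (a l))
        = q u (a k) * r (fun l => a l) := by
    intro u a
    rw [← Equiv.sum_comp e.symm, Fintype.sum_prod_type]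
    have hblock : ∀ x y,
        (∏ l, G l (e.symm (x, y)) (a l))
          = G k (e.symm (x, fun _ => w₀)) (a k)
            * ∏ l : {l : Fin m // l ≠ k}, G l (e.symm (fun _ => w₀, y)) (a l) := by
      intro x y
      rw [← Finset.mul_prod_erase Finset.univ _ (Finset.mem_univ k)]
      congr 1
      · exact congrFun (hGk x y) (a k)
      · rw [Finset.prod_subtype (p := fun l : Fin m => l ≠ k) (Finset.univ.erase k)
          (fun l => by simp) (fun l => G l (e.symm (x, y)) (a l))]
        exact Finset.prod_congr rfl fun l _ => congrFun (hGl l l.2 x y) (a l)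
    calc ∑ x, ∑ y, condProd μi j u (e.symm (x, y)) * ∏ l, G l (e.symm (x, y)) (a l)
        = ∑ x, ∑ y, (Px u x * G k (e.symm (x, fun _ => w₀)) (a k))
            * (Py y * ∏ l : {l : Fin m // l ≠ k}, G l (e.symm (fun _ => w₀, y)) (a l)) := by
          refine Finset.sum_congr rfl fun x _ => Finset.sum_congr rfl fun y _ => ?_
          rw [hsplit, hblock]; ring
      _ = q u (a k) * r (fun l => a l) := by
          rw [hqdef, hrdef, Fintype.sum_mul_sum]
  -- r is nonnegative
  have hrnn : ∀ c, 0 ≤ r c := by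
    intro c
    refine Finset.sum_nonneg fun y _ => mul_nonneg ?_ ?_
    · exact Finset.prod_nonneg fun i _ => (hμi i).1 _
    · exact Finset.prod_nonneg fun l _ => (hG l _).1 _
  -- r sums to 1
  have hr1 : ∑ c, r c = 1 := by
    rw [hrdef]
    rw [Finset.sum_comm]
    calc ∑ y, ∑ c : {l : Fin m // l ≠ k} → A,
          Py y * ∏ l : {l : Fin m // l ≠ k}, G l (e.symm (fun _ => w₀, y)) (c l)
        = ∑ y, Py y * ∑ c : {l : Fin m // l ≠ k} → A,
            ∏ l : {l : Fin m // l ≠ k}, G l (e.symm (fun _ => w₀, y)) (c l) := by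
          exact Finset.sum_congr rfl fun y _ => by rw [Finset.mul_sum]
      _ = ∑ y, Py y := by
          refine Finset.sum_congr rfl fun y _ => ?_
          rw [← Fintype.piFinset_univ, ← Finset.prod_univ_sum]
          have h1 : ∏ l : {l : Fin m // l ≠ k}, (∑ b : A, G l (e.symm (fun _ => w₀, y)) b)
              = 1 := Finset.prod_eq_one fun l _ => (hG _ _).2
          rw [h1, mul_one]
      _ = 1 := hPy1
  -- now compute
  have key : ∀ b, pushKer (condProd μi j v) (G k) b = q v b := hq v
  rw [hsDiv, hsDiv]
  calc ∑ a : Fin m → A,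
        max 0 ((∑ D, condProd μi j v D * ∏ l, G l D (a l))
          - Real.exp ε * (∑ D, condProd μi j w D * ∏ l, G l D (a l)))
      = ∑ a : Fin m → A, r (fun l => a l)
          * max 0 (q v (a k) - Real.exp ε * q w (a k)) := by
        refine Finset.sum_congr rfl fun a _ => ?_
        rw [hfac v a, hfac w a]
        rw [mul_max_of_nonneg _ _ (hrnn _), mul_zero]
        ring_nf
    _ = ∑ z : A × ({l : Fin m // l ≠ k} → A), r z.2 * max 0 (q v z.1 - Real.exp ε * q w z.1) := by
        rw [← Equiv.sum_comp (Equiv.funSplitAt k A).symm]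
        refine Finset.sum_congr rfl fun z _ => ?_
        congr 1
        · congr 1
          ext l
          simp [Equiv.funSplitAt, Equiv.piSplitAt, dif_neg l.2]
        · congr 2 <;> rw [show (Equiv.funSplitAt k A).symm z k = z.1 by
            simp [Equiv.funSplitAt, Equiv.piSplitAt]]
    _ = (∑ c, r c) * ∑ b, max 0 (q v b - Real.exp ε * q w b) := by
        rw [Fintype.sum_prod_type, Fintype.sum_mul_sum, Finset.sum_comm]
    _ = ∑ b, max 0 (q v b - Real.exp ε * q w b) := by rw [hr1, one_mul]
    _ = ∑ b, max 0 (pushKer (condProd μi j v) (G k) b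
          - Real.exp ε * pushKer (condProd μi j w) (G k) b) := by
        refine Finset.sum_congr rfl fun b _ => ?_
        rw [hq v b, hq w b]
end

section
/- Nonadaptive composition privacy bound: let μ be a product distribution on databases of size n, F = (F₁,…,F_m) a nonadaptive composition of m queries answered on the blocks of a uniform injective (n₁,…,n_m)-random partition T with n₁+···+n_m = n. Then for the critical entry j, D_ε(μ_{j,v} K_T K_F, μ_{j,w} K_T K_F) ≤ ∑_{k=1}^m (n_k/n) · E_{τ ∼ T | j∈block k}[ D_ε(μ_{j,v} K_{τ^k} K_{F_k}, μ_{j,w} K_{τ^k} K_{F_k}) ] for all v, w ∈ W and ε ≥ 0. -/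
/-- Injective templates of format `nk` partitioning `Fin n`, given as block-assignment
functions with prescribed block sizes. -/
def partitions (n m : ℕ) (nk : Fin m → ℕ) : Finset (Fin n → Fin m) :=
  Finset.univ.filter (fun f => ∀ k, (Finset.univ.filter (fun i => f i = k)).card = nk k)

open Finset

section Helpers
variable {W : Type*} [Fintype W] [DecidableEq W] {n : ℕ}

noncomputable def nu (μi : Fin n → W → ℝ) (j : Fin n) (v : W) : Fin n → W → ℝ :=
  fun i x => if i = j then (if x = v then (1 : ℝ) else 0) else μi i x

lemma condProd_eq_prod_nu (μi : Fin n → W → ℝ) (j : Fin n) (v : W) (D : Fin n → W) :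
    condProd μi j v D = ∏ i, nu μi j v i (D i) := rfl

lemma nu_sum (μi : Fin n → W → ℝ) (hμi : ∀ i, IsPMF (μi i)) (j : Fin n) (v : W) (i : Fin n) :
    ∑ x, nu μi j v i x = 1 := by
  unfold nu
  by_cases hi : i = j
  · simp [hi]
  · simp [hi, (hμi i).2]

lemma condProd_nonneg (μi : Fin n → W → ℝ) (hμi : ∀ i, IsPMF (μi i)) (j : Fin n) (v : W)
    (D : Fin n → W) : 0 ≤ condProd μi j v D := by
  refine Finset.prod_nonneg fun i _ => ?_
  rcases eq_or_ne i j with hi | hi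
  · subst hi
    by_cases hD : D i = v <;> simp [hD]
  · simp only [if_neg hi]; exact (hμi i).1 _

lemma condProd_sum (μi : Fin n → W → ℝ) (hμi : ∀ i, IsPMF (μi i)) (j : Fin n) (v : W) :
    ∑ D : Fin n → W, condProd μi j v D = 1 := by
  classical
  simp_rw [condProd_eq_prod_nu]
  rw [← Fintype.prod_sum]
  exact Finset.prod_eq_one fun i _ => nu_sum μi hμi j v i

lemma swap_vw (μi : Fin n → W → ℝ) (j : Fin n) (v w : W) (h : (Fin n → W) → ℝ)
    (hh : ∀ D D' : Fin n → W, (∀ i, i ≠ j → D i = D' i) → h D = h D') :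
    ∑ D : Fin n → W, condProd μi j v D * h D
      = ∑ D : Fin n → W, condProd μi j w D * h D := by
  classical
  have hinv : Function.Involutive
      (fun D : Fin n → W => Function.update D j (Equiv.swap v w (D j))) := by
    intro D; funext i
    by_cases hi : i = j
    · subst hi; simp
    · simp [Function.update_of_ne hi]
  rw [← Equiv.sum_comp (hinv.toPerm _) (fun D => condProd μi j v D * h D)]
  refine Finset.sum_congr rfl fun D _ => ?_
  have hσ : hinv.toPerm _ D = Function.update D j (Equiv.swap v w (D j)) := rfl
  have h1 : h (hinv.toPerm _ D) = h D := by
    refine hh _ _ fun i hi => ?_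
    rw [hσ, Function.update_of_ne hi]
  have h2 : condProd μi j v (hinv.toPerm _ D) = condProd μi j w D := by
    rw [hσ]; unfold condProd
    refine Finset.prod_congr rfl fun i _ => ?_
    by_cases hi : i = j
    · subst hi
      simp only [if_pos rfl, Function.update_self]
      simp [Equiv.apply_eq_iff_eq_symm_apply]
    · simp [Function.update_of_ne hi, hi]
  rw [h1, h2]

lemma sum_pi_split {ι : Type*} [Fintype ι] [DecidableEq ι] [Nonempty W]
    (p : ι → Prop) [DecidablePred p]
    (F : ι → W → ℝ) (hF : ∀ i, ∑ x, F i x = 1)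
    (g h : (ι → W) → ℝ)
    (hg : ∀ D D' : ι → W, (∀ i, p i → D i = D' i) → g D = g D')
    (hh : ∀ D D' : ι → W, (∀ i, ¬ p i → D i = D' i) → h D = h D') :
    ∑ D : ι → W, (∏ i, F i (D i)) * (g D * h D)
      = (∑ D : ι → W, (∏ i, F i (D i)) * g D)
        * (∑ D : ι → W, (∏ i, F i (D i)) * h D) := by
  classical
  set e := Equiv.piEquivPiSubtypeProd p (fun _ : ι => W) with he
  have hkey : ∀ φ : (ι → W) → ℝ,
      ∑ D : ι → W, φ D
        = ∑ x : ∀ _ : {x // p x}, W, ∑ y : ∀ _ : {x // ¬ p x}, W, φ (e.symm (x, y)) := by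
    intro φ
    rw [← Equiv.sum_comp e.symm φ, Fintype.sum_prod_type]
  have hcoord1 : ∀ (x : ∀ _ : {x // p x}, W) (y : ∀ _ : {x // ¬ p x}, W)
      (i : {x // p x}), e.symm (x, y) i.1 = x i := by
    intro x y i; simp [he, i.2]
  have hcoord2 : ∀ (x : ∀ _ : {x // p x}, W) (y : ∀ _ : {x // ¬ p x}, W)
      (i : {x // ¬ p x}), e.symm (x, y) i.1 = y i := by
    intro x y i
    simp only [he, Equiv.piEquivPiSubtypeProd_symm_apply]
    rw [dif_neg i.2]
  have hsplit : ∀ (x : ∀ _ : {x // p x}, W) (y : ∀ _ : {x // ¬ p x}, W),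
      (∏ i, F i (e.symm (x, y) i))
        = (∏ i : {x // p x}, F i (x i)) * (∏ i : {x // ¬ p x}, F i (y i)) := by
    intro x y
    rw [← Fintype.prod_subtype_mul_prod_subtype p (fun i => F i (e.symm (x, y) i))]
    congr 1
    · exact Finset.prod_congr rfl fun i _ => by rw [hcoord1]
    · exact Finset.prod_congr rfl fun i _ => by rw [hcoord2]
  set y₀ : ∀ _ : {x // ¬ p x}, W := fun _ => Classical.arbitrary W with hy₀
  set x₀ : ∀ _ : {x // p x}, W := fun _ => Classical.arbitrary W with hx₀
  set G : (∀ _ : {x // p x}, W) → ℝ := fun x => g (e.symm (x, y₀)) with hG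
  set H : (∀ _ : {x // ¬ p x}, W) → ℝ := fun y => h (e.symm (x₀, y)) with hH
  have hgG : ∀ (x : ∀ _ : {x // p x}, W) (y : ∀ _ : {x // ¬ p x}, W),
      g (e.symm (x, y)) = G x := by
    intro x y
    exact hg _ _ fun i hi => by rw [hcoord1 x y ⟨i, hi⟩, hcoord1 x y₀ ⟨i, hi⟩]
  have hhH : ∀ (x : ∀ _ : {x // p x}, W) (y : ∀ _ : {x // ¬ p x}, W),
      h (e.symm (x, y)) = H y := by
    intro x y
    exact hh _ _ fun i hi => by rw [hcoord2 x y ⟨i, hi⟩, hcoord2 x₀ y ⟨i, hi⟩]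
  have hone1 : ∑ x : ∀ _ : {x // p x}, W, ∏ i : {x // p x}, F i (x i) = 1 := by
    rw [← Fintype.prod_sum]
    exact Finset.prod_eq_one fun i _ => hF i
  have hone2 : ∑ y : ∀ _ : {x // ¬ p x}, W, ∏ i : {x // ¬ p x}, F i (y i) = 1 := by
    rw [← Fintype.prod_sum]
    exact Finset.prod_eq_one fun i _ => hF i
  have e1 : ∑ D : ι → W, (∏ i, F i (D i)) * (g D * h D)
      = (∑ x : ∀ _ : {x // p x}, W, (∏ i : {x // p x}, F i (x i)) * G x)
        * (∑ y : ∀ _ : {x // ¬ p x}, W, (∏ i : {x // ¬ p x}, F i (y i)) * H y) := by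
    rw [hkey, Finset.sum_mul_sum]
    refine Finset.sum_congr rfl fun x _ => Finset.sum_congr rfl fun y _ => ?_
    rw [hsplit, hgG, hhH]; ring
  have e2 : ∑ D : ι → W, (∏ i, F i (D i)) * g D
      = ∑ x : ∀ _ : {x // p x}, W, (∏ i : {x // p x}, F i (x i)) * G x := by
    rw [hkey]
    have inner : ∀ x : ∀ _ : {x // p x}, W,
        ∑ y : ∀ _ : {x // ¬ p x}, W, (∏ i, F i (e.symm (x, y) i)) * g (e.symm (x, y))
          = (∏ i : {x // p x}, F i (x i)) * G x := by
      intro x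
      have step : ∀ y : ∀ _ : {x // ¬ p x}, W,
          (∏ i, F i (e.symm (x, y) i)) * g (e.symm (x, y))
            = ((∏ i : {x // p x}, F i (x i)) * G x) * ∏ i : {x // ¬ p x}, F i (y i) := by
        intro y; rw [hsplit, hgG]; ring
      rw [Finset.sum_congr rfl fun y _ => step y, ← Finset.mul_sum, hone2, mul_one]
    exact Finset.sum_congr rfl fun x _ => inner x
  have e3 : ∑ D : ι → W, (∏ i, F i (D i)) * h D
      = ∑ y : ∀ _ : {x // ¬ p x}, W, (∏ i : {x // ¬ p x}, F i (y i)) * H y := by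
    rw [hkey]
    have inner : ∀ x : ∀ _ : {x // p x}, W,
        ∑ y : ∀ _ : {x // ¬ p x}, W, (∏ i, F i (e.symm (x, y) i)) * h (e.symm (x, y))
          = (∏ i : {x // p x}, F i (x i))
            * ∑ y : ∀ _ : {x // ¬ p x}, W, (∏ i : {x // ¬ p x}, F i (y i)) * H y := by
      intro x
      rw [Finset.mul_sum]
      refine Finset.sum_congr rfl fun y _ => ?_
      rw [hsplit, hhH]; ring
    rw [Finset.sum_congr rfl fun x _ => inner x, ← Finset.sum_mul, hone1, one_mul]
  rw [e1, e2, e3]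

end Helpers

lemma per_f {W A : Type*} [Fintype W] [DecidableEq W] [Fintype A] [Nonempty W]
    {n m : ℕ}
    (μi : Fin n → W → ℝ) (hμi : ∀ i, IsPMF (μi i))
    (K : (Fin n → Fin m) → Fin m → (Fin n → W) → A → ℝ)
    (hK : ∀ f k D, IsPMF (K f k D))
    (hdep : ∀ f k (D D' : Fin n → W), (∀ i, f i = k → D i = D' i) → K f k D = K f k D')
    (j : Fin n) (v w : W) (ε : ℝ) (f : Fin n → Fin m) :
    hsDiv ε (fun a : Fin m → A => ∑ D : Fin n → W, condProd μi j v D * ∏ k, K f k D (a k))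
            (fun a : Fin m → A => ∑ D : Fin n → W, condProd μi j w D * ∏ k, K f k D (a k))
      = hsDiv ε (pushKer (condProd μi j v) (K f (f j)))
               (pushKer (condProd μi j w) (K f (f j))) := by
  classical
  set k₀ := f j with hk₀
  -- split the product over blocks
  have prodsplit : ∀ (D : Fin n → W) (a : Fin m → A),
      ∏ k, K f k D (a k)
        = K f k₀ D (a k₀) * ∏ k : {k : Fin m // ¬ k = k₀}, K f k.1 D (a k.1) := by
    intro D a
    rw [← Finset.prod_mul_prod_compl {k₀} (fun k => K f k D (a k)), Finset.prod_singleton]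
    congr 1
    refine Finset.prod_subtype _ (fun k => ?_) _
    simp
  -- the common "rest" factor
  set R : ({k : Fin m // ¬ k = k₀} → A) → ℝ :=
    fun y => ∑ D : Fin n → W, condProd μi j v D
      * ∏ k : {k : Fin m // ¬ k = k₀}, K f k.1 D (y k) with hR
  -- generic factorization for any starting value u ∈ {v, w}
  have factor : ∀ (u : W) (a : Fin m → A),
      (∑ D : Fin n → W, condProd μi j u D * ∏ k, K f k D (a k))
        = pushKer (condProd μi j u) (K f k₀) (a k₀)
          * ∑ D : Fin n → W, condProd μi j u D
              * ∏ k : {k : Fin m // ¬ k = k₀}, K f k.1 D (a k.1) := by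
    intro u a
    have hg : ∀ D D' : Fin n → W, (∀ i, f i = k₀ → D i = D' i) →
        K f k₀ D (a k₀) = K f k₀ D' (a k₀) := by
      intro D D' hDD'
      rw [hdep f k₀ D D' hDD']
    have hh : ∀ D D' : Fin n → W, (∀ i, ¬ f i = k₀ → D i = D' i) →
        (∏ k : {k : Fin m // ¬ k = k₀}, K f k.1 D (a k.1))
          = ∏ k : {k : Fin m // ¬ k = k₀}, K f k.1 D' (a k.1) := by
      intro D D' hDD'
      refine Finset.prod_congr rfl fun k _ => ?_
      rw [hdep f k.1 D D' (fun i hik => hDD' i (by rw [hik]; exact k.2))]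
    have := sum_pi_split (W := W) (ι := Fin n) (p := fun i => f i = k₀)
      (nu μi j u) (nu_sum μi hμi j u)
      (fun D => K f k₀ D (a k₀))
      (fun D => ∏ k : {k : Fin m // ¬ k = k₀}, K f k.1 D (a k.1)) hg hh
    calc (∑ D : Fin n → W, condProd μi j u D * ∏ k, K f k D (a k))
        = ∑ D : Fin n → W, (∏ i, nu μi j u i (D i))
            * (K f k₀ D (a k₀) * ∏ k : {k : Fin m // ¬ k = k₀}, K f k.1 D (a k.1)) := by
          refine Finset.sum_congr rfl fun D _ => ?_
          rw [← condProd_eq_prod_nu, prodsplit]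
      _ = (∑ D : Fin n → W, (∏ i, nu μi j u i (D i)) * K f k₀ D (a k₀))
            * (∑ D : Fin n → W, (∏ i, nu μi j u i (D i))
                * ∏ k : {k : Fin m // ¬ k = k₀}, K f k.1 D (a k.1)) := this
      _ = _ := by
          simp_rw [← condProd_eq_prod_nu]
          rfl
  have hrestdep : ∀ (y : {k : Fin m // ¬ k = k₀} → A) (D D' : Fin n → W),
      (∀ i, i ≠ j → D i = D' i) →
      (∏ k : {k : Fin m // ¬ k = k₀}, K f k.1 D (y k))
        = ∏ k : {k : Fin m // ¬ k = k₀}, K f k.1 D' (y k) := by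
    intro y D D' hDD'
    refine Finset.prod_congr rfl fun k _ => ?_
    refine congrFun (hdep f k.1 D D' fun i hik => hDD' i fun hij => ?_) _
    exact k.2 (by rw [← hik, hij, hk₀])
  have factor_w : ∀ a : Fin m → A,
      (∑ D : Fin n → W, condProd μi j w D * ∏ k, K f k D (a k))
        = pushKer (condProd μi j w) (K f k₀) (a k₀) * R (fun k => a k.1) := by
    intro a
    rw [factor w a]
    congr 1
    exact (swap_vw μi j v w (fun D => ∏ k : {k : Fin m // ¬ k = k₀}, K f k.1 D (a k.1))
      (hrestdep (fun k => a k.1))).symm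
  have factor_v : ∀ a : Fin m → A,
      (∑ D : Fin n → W, condProd μi j v D * ∏ k, K f k D (a k))
        = pushKer (condProd μi j v) (K f k₀) (a k₀) * R (fun k => a k.1) := by
    intro a
    rw [factor v a]
  -- R is nonnegative and sums to one
  have Rnonneg : ∀ y, 0 ≤ R y := by
    intro y
    refine Finset.sum_nonneg fun D _ => mul_nonneg (condProd_nonneg μi hμi j v D) ?_
    exact Finset.prod_nonneg fun k _ => (hK f k.1 D).1 _
  have Rsum : ∑ y : {k : Fin m // ¬ k = k₀} → A, R y = 1 := by
    rw [hR]
    rw [Finset.sum_comm]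
    have inner : ∀ D : Fin n → W,
        (∑ y : {k : Fin m // ¬ k = k₀} → A, condProd μi j v D
          * ∏ k : {k : Fin m // ¬ k = k₀}, K f k.1 D (y k)) = condProd μi j v D := by
      intro D
      rw [← Finset.mul_sum, ← Fintype.prod_sum]
      rw [Finset.prod_eq_one fun k _ => (hK f k.1 D).2, mul_one]
    rw [Finset.sum_congr rfl fun D _ => inner D]
    exact condProd_sum μi hμi j v
  -- now compute the hockey-stick divergence
  unfold hsDiv
  set e := Equiv.piSplitAt k₀ (fun _ : Fin m => A) with he
  have hsum : ∀ φ : (Fin m → A) → ℝ,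
      ∑ a : Fin m → A, φ a
        = ∑ b : A, ∑ y : {k : Fin m // ¬ k = k₀} → A, φ (e.symm (b, y)) := by
    intro φ
    rw [← Equiv.sum_comp e.symm φ, Fintype.sum_prod_type]
  rw [hsum]
  have coord1 : ∀ (b : A) (y : {k : Fin m // ¬ k = k₀} → A), e.symm (b, y) k₀ = b := by
    intro b y; simp [he]
  have coord2 : ∀ (b : A) (y : {k : Fin m // ¬ k = k₀} → A),
      (fun k : {k : Fin m // ¬ k = k₀} => e.symm (b, y) k.1) = y := by
    intro b y; funext k
    simp only [he, Equiv.piSplitAt_symm_apply]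
    rw [dif_neg k.2]
  have main : ∀ b : A,
      (∑ y : {k : Fin m // ¬ k = k₀} → A,
        max 0 ((∑ D : Fin n → W, condProd μi j v D * ∏ k, K f k D (e.symm (b, y) k))
          - Real.exp ε * ∑ D : Fin n → W, condProd μi j w D * ∏ k, K f k D (e.symm (b, y) k)))
        = max 0 (pushKer (condProd μi j v) (K f k₀) b
            - Real.exp ε * pushKer (condProd μi j w) (K f k₀) b) := by
    intro b
    have step : ∀ y : {k : Fin m // ¬ k = k₀} → A,
        max 0 ((∑ D : Fin n → W, condProd μi j v D * ∏ k, K f k D (e.symm (b, y) k))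
          - Real.exp ε * ∑ D : Fin n → W, condProd μi j w D * ∏ k, K f k D (e.symm (b, y) k))
          = R y * max 0 (pushKer (condProd μi j v) (K f k₀) b
              - Real.exp ε * pushKer (condProd μi j w) (K f k₀) b) := by
      intro y
      rw [factor_v, factor_w, coord1, coord2]
      rw [mul_max_of_nonneg _ _ (Rnonneg y), mul_zero]
      congr 1
      ring
    rw [Finset.sum_congr rfl fun y _ => step y, ← Finset.sum_mul, Rsum, one_mul]
  rw [Finset.sum_congr rfl fun b _ => main b]

lemma max_zero_sum_le' {ι : Type*} (s : Finset ι) (x : ι → ℝ) :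
    max 0 (∑ i ∈ s, x i) ≤ ∑ i ∈ s, max 0 (x i) :=
  max_le (Finset.sum_nonneg fun i _ => le_max_left _ _)
    (Finset.sum_le_sum fun i _ => le_max_right _ _)

lemma comp_perm_mem_partitions {n m : ℕ} {nk : Fin m → ℕ} (f : Fin n → Fin m)
    (e : Equiv.Perm (Fin n)) (hf : f ∈ partitions n m nk) :
    (fun i => f (e i)) ∈ partitions n m nk := by
  simp only [partitions, mem_filter, mem_univ, true_and] at hf ⊢
  intro k
  rw [← hf k]
  apply Finset.card_bij (fun i _ => e i)
  · intro i hi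
    simp only [mem_filter, mem_univ, true_and] at hi ⊢
    exact hi
  · intro i _ i' _ hii'
    exact e.injective hii'
  · intro b hb
    refine ⟨e.symm b, ?_, by simp⟩
    simp only [mem_filter, mem_univ, true_and] at hb ⊢
    simpa using hb

lemma card_filter_eq {n m : ℕ} (nk : Fin m → ℕ) (i j : Fin n) (k : Fin m) :
    ((partitions n m nk).filter (fun f => f i = k)).card
      = ((partitions n m nk).filter (fun f => f j = k)).card := by
  classical
  apply Finset.card_bij' (fun f _ => fun i' => f (Equiv.swap i j i'))
    (fun f _ => fun i' => f (Equiv.swap i j i'))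
  · intro f hf
    simp only [mem_filter] at hf ⊢
    refine ⟨comp_perm_mem_partitions f _ hf.1, ?_⟩
    simpa using hf.2
  · intro f hf
    simp only [mem_filter] at hf ⊢
    refine ⟨comp_perm_mem_partitions f _ hf.1, ?_⟩
    simpa using hf.2
  · intro f _; funext i'; simp
  · intro f _; funext i'; simp

lemma count_lemma {n m : ℕ} (nk : Fin m → ℕ) (j : Fin n) (k : Fin m) :
    n * ((partitions n m nk).filter (fun f => f j = k)).card
      = nk k * (partitions n m nk).card := by
  classical
  have h1 : ∑ i : Fin n, ((partitions n m nk).filter (fun f => f i = k)).card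
      = n * ((partitions n m nk).filter (fun f => f j = k)).card := by
    rw [Finset.sum_congr rfl fun i _ => card_filter_eq nk i j k]
    simp [Finset.sum_const, Finset.card_univ, mul_comm]
  have h2 : ∑ i : Fin n, ((partitions n m nk).filter (fun f => f i = k)).card
      = nk k * (partitions n m nk).card := by
    have : ∀ i : Fin n, ((partitions n m nk).filter (fun f => f i = k)).card
        = ∑ f ∈ partitions n m nk, if f i = k then 1 else 0 := by
      intro i; rw [Finset.card_filter]
    rw [Finset.sum_congr rfl fun i _ => this i, Finset.sum_comm]
    have : ∀ f ∈ partitions n m nk,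
        (∑ i : Fin n, if f i = k then 1 else 0) = nk k := by
      intro f hf
      simp only [partitions, mem_filter, mem_univ, true_and] at hf
      rw [← hf k, Finset.card_filter]
    rw [Finset.sum_congr rfl this]
    simp [Finset.sum_const, mul_comm]
  rw [← h1, h2]

lemma hsDiv_mixture {A ι : Type*} [Fintype A] (ε c : ℝ) (hc : 0 ≤ c) (s : Finset ι)
    (p q : ι → A → ℝ) :
    hsDiv ε (fun a => c * ∑ f ∈ s, p f a) (fun a => c * ∑ f ∈ s, q f a)
      ≤ c * ∑ f ∈ s, hsDiv ε (p f) (q f) := by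
  unfold hsDiv
  have key : ∀ a : A,
      max 0 (c * ∑ f ∈ s, p f a - Real.exp ε * (c * ∑ f ∈ s, q f a))
        ≤ ∑ f ∈ s, c * max 0 (p f a - Real.exp ε * q f a) := by
    intro a
    have h1 : c * ∑ f ∈ s, p f a - Real.exp ε * (c * ∑ f ∈ s, q f a)
        = ∑ f ∈ s, c * (p f a - Real.exp ε * q f a) := by
      rw [Finset.mul_sum, Finset.mul_sum, Finset.mul_sum, ← Finset.sum_sub_distrib]
      exact Finset.sum_congr rfl fun f _ => by ring
    rw [h1]
    refine le_trans (max_zero_sum_le' _ _) (Finset.sum_le_sum fun f _ => ?_)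
    rw [mul_max_of_nonneg _ _ hc, mul_zero]
  calc ∑ a, max 0 (c * ∑ f ∈ s, p f a - Real.exp ε * (c * ∑ f ∈ s, q f a))
      ≤ ∑ a, ∑ f ∈ s, c * max 0 (p f a - Real.exp ε * q f a) :=
        Finset.sum_le_sum fun a _ => key a
    _ = c * ∑ f ∈ s, ∑ a, max 0 (p f a - Real.exp ε * q f a) := by
        rw [Finset.sum_comm, Finset.mul_sum]
        exact Finset.sum_congr rfl fun f _ => by rw [Finset.mul_sum]

theorem nonadaptive_composition_bound
    {W A : Type*} [Fintype W] [DecidableEq W] [Fintype A]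
    {n m : ℕ} (nk : Fin m → ℕ) (hsum : ∑ k, nk k = n) (hn : 0 < n)
    (μi : Fin n → W → ℝ) (hμi : ∀ i, IsPMF (μi i))
    (K : (Fin n → Fin m) → Fin m → (Fin n → W) → A → ℝ)
    (hK : ∀ f k D, IsPMF (K f k D))
    (hdep : ∀ f k (D D' : Fin n → W), (∀ i, f i = k → D i = D' i) → K f k D = K f k D')
    (j : Fin n) (v w : W) (ε : ℝ) (hε : 0 ≤ ε) :
    hsDiv ε
      (fun a : Fin m → A => ((partitions n m nk).card : ℝ)⁻¹ *
        ∑ f ∈ partitions n m nk, ∑ D : Fin n → W, condProd μi j v D * ∏ k, K f k D (a k))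
      (fun a : Fin m → A => ((partitions n m nk).card : ℝ)⁻¹ *
        ∑ f ∈ partitions n m nk, ∑ D : Fin n → W, condProd μi j w D * ∏ k, K f k D (a k))
      ≤ ∑ k, ((nk k : ℝ) / n) *
          ((((partitions n m nk).filter (fun f => f j = k)).card : ℝ)⁻¹ *
            ∑ f ∈ (partitions n m nk).filter (fun f => f j = k),
              hsDiv ε (pushKer (condProd μi j v) (K f k))
                      (pushKer (condProd μi j w) (K f k))) := by
  classical
  have hW : Nonempty W := by
    by_contra hW
    rw [not_nonempty_iff] at hW
    have h1 := (hμi ⟨0, hn⟩).2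
    rw [Finset.univ_eq_empty, Finset.sum_empty] at h1
    exact zero_ne_one h1
  have step1 := hsDiv_mixture (A := Fin m → A) ε ((partitions n m nk).card : ℝ)⁻¹
    (inv_nonneg.mpr (Nat.cast_nonneg _)) (partitions n m nk)
    (fun f a => ∑ D : Fin n → W, condProd μi j v D * ∏ k, K f k D (a k))
    (fun f a => ∑ D : Fin n → W, condProd μi j w D * ∏ k, K f k D (a k))
  refine le_trans step1 (le_of_eq ?_)
  have hterm : ∀ f ∈ partitions n m nk,
      hsDiv ε (fun a : Fin m → A => ∑ D : Fin n → W, condProd μi j v D * ∏ k, K f k D (a k))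
              (fun a : Fin m → A => ∑ D : Fin n → W, condProd μi j w D * ∏ k, K f k D (a k))
        = hsDiv ε (pushKer (condProd μi j v) (K f (f j)))
                 (pushKer (condProd μi j w) (K f (f j))) :=
    fun f _ => per_f μi hμi K hK hdep j v w ε f
  rw [Finset.sum_congr rfl hterm]
  rw [← Finset.sum_fiberwise (partitions n m nk) (fun f => f j)
    (fun f => hsDiv ε (pushKer (condProd μi j v) (K f (f j)))
      (pushKer (condProd μi j w) (K f (f j)))), Finset.mul_sum]
  refine Finset.sum_congr rfl fun k _ => ?_
  have hfix : ∑ f ∈ (partitions n m nk).filter (fun f => f j = k),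
      hsDiv ε (pushKer (condProd μi j v) (K f (f j)))
              (pushKer (condProd μi j w) (K f (f j)))
      = ∑ f ∈ (partitions n m nk).filter (fun f => f j = k),
          hsDiv ε (pushKer (condProd μi j v) (K f k))
                  (pushKer (condProd μi j w) (K f k)) := by
    refine Finset.sum_congr rfl fun f hf => ?_
    rw [(Finset.mem_filter.mp hf).2]
  rw [hfix]
  set S : ℝ := ∑ f ∈ (partitions n m nk).filter (fun f => f j = k),
      hsDiv ε (pushKer (condProd μi j v) (K f k))
              (pushKer (condProd μi j w) (K f k)) with hS
  have hcount := count_lemma nk j k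
  by_cases hPk : ((partitions n m nk).filter (fun f => f j = k)).card = 0
  · have hempty : (partitions n m nk).filter (fun f => f j = k) = ∅ :=
      Finset.card_eq_zero.mp hPk
    have hS0 : S = 0 := by rw [hS, hempty, Finset.sum_empty]
    rw [hS0, mul_zero, mul_zero, mul_zero]
  · have hPkpos : 0 < ((partitions n m nk).filter (fun f => f j = k)).card :=
      Nat.pos_of_ne_zero hPk
    have hPpos : 0 < (partitions n m nk).card :=
      lt_of_lt_of_le hPkpos (Finset.card_le_card (Finset.filter_subset _ _))
    have hnkpos : 0 < nk k := by
      have hmul : 0 < nk k * (partitions n m nk).card := hcount ▸ Nat.mul_pos hn hPkpos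
      exact Nat.pos_of_ne_zero fun h0 => by simp [h0] at hmul
    have hkey : (n : ℝ) * (((partitions n m nk).filter (fun f => f j = k)).card : ℝ)
        = (nk k : ℝ) * ((partitions n m nk).card : ℝ) := by
      exact_mod_cast hcount
    have hcoef : (((partitions n m nk).card : ℝ))⁻¹
        = ((nk k : ℝ) / n) * ((((partitions n m nk).filter (fun f => f j = k)).card : ℝ))⁻¹ := by
      have h1 : ((partitions n m nk).card : ℝ) ≠ 0 := by positivity
      have h2 : ((((partitions n m nk).filter (fun f => f j = k)).card : ℝ)) ≠ 0 := by positivity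
      have h3 : (n : ℝ) ≠ 0 := by positivity
      field_simp
      linarith [hkey]
    rw [hcoef]
    ring
end

section
/- Nonadaptive composition for iid databases: if the entries of the database are iid with common marginal, F = (F₁,…,F_m) are symmetric queries answered on the blocks of a uniform injective (n₁,…,n_m)-random partition T with ∑ n_k = n, then F∘SAMP_T achieves (ε, δ)-statistical privacy for entry j with δ = ∑_{k=1}^m (n_k/n) · max_{v,w} D_ε(ν_{n_k,v} K_{F_k}, ν_{n_k,w} K_{F_k}), where ν_{s,v} is the distribution of an iid database of size s with one entry fixed to v. -/
/-- Distribution of an iid-`ν` database of size `s` with the first entry fixed to `v`. -/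
noncomputable def iidFix {W : Type*} [Fintype W] [DecidableEq W] {s : ℕ} (hs : 0 < s)
    (ν : W → ℝ) (v : W) : (Fin s → W) → ℝ :=
  fun x => ∏ l, if l = (⟨0, hs⟩ : Fin s) then (if x l = v then (1 : ℝ) else 0) else ν (x l)

lemma aux_hsDiv_nonneg {A : Type*} [Fintype A] (ε : ℝ) (p q : A → ℝ) : 0 ≤ hsDiv ε p q :=
  Finset.sum_nonneg fun _ _ => le_max_left _ _

lemma aux_prod_privacy_bound {A : Type*} [Fintype A] {m : ℕ}
    (k₀ : Fin m) (H1 H2 : Fin m → A → ℝ)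
    (heq : ∀ k, k ≠ k₀ → H1 k = H2 k)
    (hpmf : ∀ k, k ≠ k₀ → IsPMF (H1 k))
    (ε : ℝ) (S : Finset (Fin m → A)) :
    ∑ a ∈ S, ∏ k, H1 k (a k) ≤
      Real.exp ε * ∑ a ∈ S, ∏ k, H2 k (a k) + hsDiv ε (H1 k₀) (H2 k₀) := by
  set R : Fin m → A → ℝ := fun k c =>
    if k = k₀ then max 0 (H1 k₀ c - Real.exp ε * H2 k₀ c) else H1 k c with hR
  have hRnn : ∀ k c, 0 ≤ R k c := by
    intro k c
    by_cases h : k = k₀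
    · simp [hR, h]
    · simpa [hR, h] using (hpmf k h).1 c
  have key : ∀ a : Fin m → A,
      ∏ k, H1 k (a k) - Real.exp ε * ∏ k, H2 k (a k) ≤ ∏ k, R k (a k) := by
    intro a
    have hmem : k₀ ∈ (Finset.univ : Finset (Fin m)) := Finset.mem_univ _
    have e1 : ∏ k, H1 k (a k) = H1 k₀ (a k₀) * ∏ k ∈ Finset.univ.erase k₀, H1 k (a k) :=
      (Finset.mul_prod_erase _ _ hmem).symm
    have e2 : ∏ k, H2 k (a k) = H2 k₀ (a k₀) * ∏ k ∈ Finset.univ.erase k₀, H2 k (a k) :=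
      (Finset.mul_prod_erase _ _ hmem).symm
    have etail : ∏ k ∈ Finset.univ.erase k₀, H2 k (a k)
        = ∏ k ∈ Finset.univ.erase k₀, H1 k (a k) :=
      Finset.prod_congr rfl fun k hk => by rw [heq k (Finset.ne_of_mem_erase hk)]
    have etailnn : 0 ≤ ∏ k ∈ Finset.univ.erase k₀, H1 k (a k) :=
      Finset.prod_nonneg fun k hk => (hpmf k (Finset.ne_of_mem_erase hk)).1 _
    have eR : ∏ k, R k (a k)
        = max 0 (H1 k₀ (a k₀) - Real.exp ε * H2 k₀ (a k₀)) *
            ∏ k ∈ Finset.univ.erase k₀, H1 k (a k) := by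
      rw [← Finset.mul_prod_erase _ _ hmem]
      simp only [hR, if_pos rfl]
      exact congrArg _ (Finset.prod_congr rfl fun k hk => by
        simp [Finset.ne_of_mem_erase hk])
    rw [e1, e2, etail, eR]
    have h := mul_le_mul_of_nonneg_right
      (le_max_right 0 (H1 k₀ (a k₀) - Real.exp ε * H2 k₀ (a k₀))) etailnn
    nlinarith [h]
  have step1 : ∑ a ∈ S, ∏ k, H1 k (a k) - Real.exp ε * ∑ a ∈ S, ∏ k, H2 k (a k)
      ≤ ∑ a ∈ S, ∏ k, R k (a k) := by
    rw [Finset.mul_sum, ← Finset.sum_sub_distrib]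
    exact Finset.sum_le_sum fun a _ => key a
  have step2 : ∑ a ∈ S, ∏ k, R k (a k) ≤ ∑ a : Fin m → A, ∏ k, R k (a k) :=
    Finset.sum_le_sum_of_subset_of_nonneg (Finset.subset_univ S)
      (fun a _ _ => Finset.prod_nonneg fun k _ => hRnn k _)
  have step3 : ∑ a : Fin m → A, ∏ k, R k (a k) = hsDiv ε (H1 k₀) (H2 k₀) := by
    rw [← Fintype.piFinset_univ, ← Finset.prod_univ_sum]
    have : ∀ k : Fin m, ∑ c, R k c = if k = k₀ then hsDiv ε (H1 k₀) (H2 k₀) else 1 := by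
      intro k
      by_cases h : k = k₀
      · simp [hR, h, hsDiv]
      · simp only [hR, if_neg h]
        exact (hpmf k h).2
    rw [Finset.prod_congr rfl fun k _ => this k]
    simp
  linarith [step1, step2.trans_eq step3]

lemma aux_block_factor {W A : Type*} [Fintype W] [DecidableEq W] [Fintype A]
    {n m : ℕ} (nk : Fin m → ℕ) (hsum : ∑ k, nk k = n)
    (ν : W → ℝ)
    (F : (k : Fin m) → (Fin (nk k) → W) → A → ℝ)
    (j : Fin n) (v : W)
    (ee : (k : Fin m) → Fin (nk k) → Fin n)
    (hinj : ∀ k, Function.Injective (ee k))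
    (f : Fin n → Fin m) (hval : ∀ k l, f (ee k l) = k)
    (a : Fin m → A) :
    ∑ D : Fin n → W,
      (∏ i, if i = j then (if D i = v then (1:ℝ) else 0) else ν (D i)) *
        ∏ k, F k (fun l => D (ee k l)) (a k)
    = ∏ k, ∑ x : Fin (nk k) → W,
        (∏ l, if ee k l = j then (if x l = v then (1:ℝ) else 0) else ν (x l)) *
          F k x (a k) := by
  set wt : Fin n → W → ℝ := fun i u => if i = j then (if u = v then 1 else 0) else ν u with hwt
  set E : (Σ k, Fin (nk k)) → Fin n := fun p => ee p.1 p.2 with hE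
  have hEinj : Function.Injective E := by
    rintro ⟨k, l⟩ ⟨k', l'⟩ h
    have hk : k = k' := by rw [← hval k l, ← hval k' l']; exact congrArg f h
    subst hk
    exact Sigma.ext rfl (heq_of_eq (hinj k h))
  have hEbij : Function.Bijective E :=
    (Fintype.bijective_iff_injective_and_card E).2 ⟨hEinj, by simp [hsum]⟩
  set Φ : (Fin n → W) → ((k : Fin m) → Fin (nk k) → W) := fun D k l => D (ee k l) with hΦ
  have hcard : Fintype.card (Fin n → W) = Fintype.card ((k : Fin m) → Fin (nk k) → W) :=
    Fintype.card_congr <|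
      ((Equiv.arrowCongr (Equiv.ofBijective E hEbij) (Equiv.refl W)).symm.trans
        (Equiv.piCurry fun _ _ => W))
  have hΦbij : Function.Bijective Φ := by
    refine (Fintype.bijective_iff_injective_and_card Φ).2 ⟨?_, hcard⟩
    intro D D' h
    funext i
    obtain ⟨⟨k, l⟩, rfl⟩ := hEbij.surjective i
    exact congrFun (congrFun h k) l
  have hrhs : (∏ k, ∑ x : Fin (nk k) → W,
        (∏ l, wt (ee k l) (x l)) * F k x (a k))
      = ∑ x : (k : Fin m) → Fin (nk k) → W,
          ∏ k, (∏ l, wt (ee k l) (x k l)) * F k (x k) (a k) := by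
    rw [Finset.prod_univ_sum, Fintype.piFinset_univ]
  rw [hrhs]
  refine Fintype.sum_bijective Φ hΦbij _ _ fun D => ?_
  have hprod : (∏ i, wt i (D i)) = ∏ k, ∏ l, wt (ee k l) (D (ee k l)) := by
    rw [← (Fintype.prod_bijective E hEbij (fun p => wt (E p) (D (E p)))
      (fun i => wt i (D i)) fun p => rfl)]
    rw [← Finset.univ_sigma_univ, Finset.prod_sigma]
  rw [hprod, ← Finset.prod_mul_distrib]

lemma aux_fixed_block {W A : Type*} [Fintype W] [DecidableEq W] [Fintype A] {s : ℕ}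
    (hs : 0 < s) (ν : W → ℝ) (v : W) (G : (Fin s → W) → A → ℝ)
    (hsym : ∀ σ : Equiv.Perm (Fin s), ∀ x, G (x ∘ σ) = G x)
    (l₀ : Fin s) (c : A) :
    ∑ x : Fin s → W,
      (∏ l, if l = l₀ then (if x l = v then (1:ℝ) else 0) else ν (x l)) * G x c
    = pushKer (iidFix hs ν v) G c := by
  set σ : Equiv.Perm (Fin s) := Equiv.swap ⟨0, hs⟩ l₀ with hσ
  have hbij : Function.Bijective (fun y : Fin s → W => y ∘ σ) :=
    (Equiv.arrowCongr σ.symm (Equiv.refl W)).bijective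
  refine (Fintype.sum_bijective (fun y : Fin s → W => y ∘ σ) hbij
    (fun y => iidFix hs ν v y * G y c)
    (fun x => (∏ l, if l = l₀ then (if x l = v then (1:ℝ) else 0) else ν (x l)) * G x c)
    fun y => ?_).symm
  rw [hsym σ y]
  congr 1
  unfold iidFix
  refine Fintype.prod_equiv σ _ _ fun l => ?_
  have h1 : σ (σ l) = σ.symm (σ l) := by rw [hσ, Equiv.symm_swap]
  have h2 : (l = (⟨0, hs⟩ : Fin s)) = (σ l = l₀) := by
    rw [eq_iff_iff, hσ]
    constructor
    · rintro rfl; exact Equiv.swap_apply_left _ _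
    · intro h
      have := congrArg (Equiv.swap (⟨0, hs⟩ : Fin s) l₀) h
      rwa [Equiv.swap_apply_self, Equiv.swap_apply_right] at this
  simp only [Function.comp_apply, h2, h1, Equiv.symm_apply_apply]

lemma aux_mem_partitions_comp {n m : ℕ} {nk : Fin m → ℕ} (f : Fin n → Fin m)
    (σ : Equiv.Perm (Fin n)) (hf : f ∈ partitions n m nk) :
    f ∘ σ ∈ partitions n m nk := by
  simp only [partitions, Finset.mem_filter, Finset.mem_univ, true_and] at *
  intro k
  rw [← hf k]
  apply Finset.card_bij (fun i _ => σ i)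
  · intro a ha
    simp only [Finset.mem_filter, Finset.mem_univ, true_and, Function.comp_apply] at *
    exact ha
  · intro a _ b _ h
    exact σ.injective h
  · intro b hb
    simp only [Finset.mem_filter, Finset.mem_univ, true_and, Function.comp_apply] at *
    exact ⟨σ.symm b, by simpa using hb, by simp⟩

lemma aux_count_eq {n m : ℕ} {nk : Fin m → ℕ} (i j : Fin n) (k : Fin m) :
    ((partitions n m nk).filter fun f => f i = k).card
      = ((partitions n m nk).filter fun f => f j = k).card := by
  apply Finset.card_bij' (fun f _ => f ∘ (Equiv.swap i j : Equiv.Perm (Fin n)))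
    (fun f _ => f ∘ (Equiv.swap i j : Equiv.Perm (Fin n)))
  · intro f hf
    simp only [Finset.mem_filter] at hf ⊢
    exact ⟨aux_mem_partitions_comp f _ hf.1, by simpa [Equiv.swap_apply_right] using hf.2⟩
  · intro f hf
    simp only [Finset.mem_filter] at hf ⊢
    exact ⟨aux_mem_partitions_comp f _ hf.1, by simpa [Equiv.swap_apply_left] using hf.2⟩
  · intro f _
    funext x
    simp [Equiv.swap_apply_self]
  · intro f _
    funext x
    simp [Equiv.swap_apply_self]

lemma aux_count_mul {n m : ℕ} {nk : Fin m → ℕ} (j : Fin n) (k : Fin m) :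
    nk k * (partitions n m nk).card
      = n * ((partitions n m nk).filter fun f => f j = k).card := by
  have h1 : ∀ f ∈ partitions n m nk,
      nk k = ∑ i : Fin n, if f i = k then 1 else 0 := by
    intro f hf
    simp only [partitions, Finset.mem_filter, Finset.mem_univ, true_and] at hf
    rw [← hf k, Finset.card_filter]
  calc nk k * (partitions n m nk).card
      = ∑ f ∈ partitions n m nk, nk k := by rw [Finset.sum_const, smul_eq_mul, mul_comm]
    _ = ∑ f ∈ partitions n m nk, ∑ i : Fin n, if f i = k then 1 else 0 :=
        Finset.sum_congr rfl h1
    _ = ∑ i : Fin n, ∑ f ∈ partitions n m nk, if f i = k then 1 else 0 :=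
        Finset.sum_comm
    _ = ∑ i : Fin n, ((partitions n m nk).filter fun f => f i = k).card :=
        Finset.sum_congr rfl fun i _ => (Finset.card_filter _ _).symm
    _ = ∑ _i : Fin n, ((partitions n m nk).filter fun f => f j = k).card :=
        Finset.sum_congr rfl fun i _ => aux_count_eq i j k
    _ = n * ((partitions n m nk).filter fun f => f j = k).card := by
        rw [Finset.sum_const, smul_eq_mul, Finset.card_univ, Fintype.card_fin]

theorem iid_nonadaptive_composition_statistical_privacy
    {W A : Type*} [Fintype W] [DecidableEq W] [Nonempty W] [Fintype A]
    {n m : ℕ} (nk : Fin m → ℕ) (hpos : ∀ k, 0 < nk k)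
    (hsum : ∑ k, nk k = n) (hn : 0 < n)
    (ν : W → ℝ) (hν : IsPMF ν)
    (F : (k : Fin m) → (Fin (nk k) → W) → A → ℝ)
    (hF : ∀ k x, IsPMF (F k x))
    (hsym : ∀ (k : Fin m) (σ : Equiv.Perm (Fin (nk k))) (x : Fin (nk k) → W),
      F k (x ∘ σ) = F k x)
    (j : Fin n)
    -- `e f k` enumerates the `k`-th block of the partition `f`
    (e : (Fin n → Fin m) → (k : Fin m) → Fin (nk k) → Fin n)
    (he : ∀ f ∈ partitions n m nk, ∀ k,
      Function.Injective (e f k) ∧ ∀ l, f (e f k l) = k)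
    (ε : ℝ) (hε : 0 ≤ ε) :
    ∀ (v w : W) (S : Finset (Fin m → A)),
      ∑ a ∈ S, (((partitions n m nk).card : ℝ)⁻¹ *
          ∑ f ∈ partitions n m nk, ∑ D : Fin n → W,
            (∏ i, if i = j then (if D i = v then (1 : ℝ) else 0) else ν (D i)) *
              ∏ k, F k (fun l => D (e f k l)) (a k))
        ≤ Real.exp ε *
            (∑ a ∈ S, (((partitions n m nk).card : ℝ)⁻¹ *
              ∑ f ∈ partitions n m nk, ∑ D : Fin n → W,
                (∏ i, if i = j then (if D i = w then (1 : ℝ) else 0) else ν (D i)) *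
                  ∏ k, F k (fun l => D (e f k l)) (a k)))
          + ∑ k, ((nk k : ℝ) / n) *
              ⨆ v' : W, ⨆ w' : W,
                hsDiv ε (pushKer (iidFix (hpos k) ν v') (F k))
                        (pushKer (iidFix (hpos k) ν w') (F k)) := by
  intro v w S
  set P := partitions n m nk with hPdef
  set Δ : Fin m → ℝ := fun k => ⨆ v' : W, ⨆ w' : W,
      hsDiv ε (pushKer (iidFix (hpos k) ν v') (F k))
              (pushKer (iidFix (hpos k) ν w') (F k)) with hΔdef
  have hΔle : ∀ (k : Fin m) (v' w' : W),
      hsDiv ε (pushKer (iidFix (hpos k) ν v') (F k))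
              (pushKer (iidFix (hpos k) ν w') (F k)) ≤ Δ k := by
    intro k v' w'
    have h1 : hsDiv ε (pushKer (iidFix (hpos k) ν v') (F k))
        (pushKer (iidFix (hpos k) ν w') (F k))
        ≤ ⨆ w'' : W, hsDiv ε (pushKer (iidFix (hpos k) ν v') (F k))
            (pushKer (iidFix (hpos k) ν w'') (F k)) :=
      le_ciSup (f := fun w'' : W => hsDiv ε (pushKer (iidFix (hpos k) ν v') (F k))
        (pushKer (iidFix (hpos k) ν w'') (F k))) (Finite.bddAbove_range _) w'
    exact h1.trans (le_ciSup (f := fun v'' : W => ⨆ w'' : W,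
      hsDiv ε (pushKer (iidFix (hpos k) ν v'') (F k))
              (pushKer (iidFix (hpos k) ν w'') (F k))) (Finite.bddAbove_range _) v')
  have hΔnn : ∀ k, 0 ≤ Δ k := by
    intro k
    obtain ⟨x⟩ := (inferInstance : Nonempty W)
    exact (aux_hsDiv_nonneg ε _ _).trans (hΔle k x x)
  by_cases hc : P.card = 0
  · have hδ : 0 ≤ ∑ k, ((nk k : ℝ) / n) * Δ k :=
      Finset.sum_nonneg fun k _ => mul_nonneg (by positivity) (hΔnn k)
    simp only [← hPdef, hc, Nat.cast_zero, inv_zero, zero_mul, Finset.sum_const_zero]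
    nlinarith [Real.exp_pos ε]
  · -- main case
    have hcpos : (0:ℝ) < P.card := by positivity
    -- per-partition bound
    have per_f : ∀ f ∈ P,
        (∑ a ∈ S, ∑ D : Fin n → W,
          (∏ i, if i = j then (if D i = v then (1:ℝ) else 0) else ν (D i)) *
            ∏ k, F k (fun l => D (e f k l)) (a k))
        ≤ Real.exp ε * (∑ a ∈ S, ∑ D : Fin n → W,
            (∏ i, if i = j then (if D i = w then (1:ℝ) else 0) else ν (D i)) *
              ∏ k, F k (fun l => D (e f k l)) (a k)) + Δ (f j) := by
      intro f hf
      have hinjk : ∀ k, Function.Injective (e f k) := fun k => (he f hf k).1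
      have hvalk : ∀ k l, f (e f k l) = k := fun k l => (he f hf k).2 l
      set H : W → Fin m → A → ℝ := fun u k c => ∑ x : Fin (nk k) → W,
        (∏ l, if e f k l = j then (if x l = u then (1:ℝ) else 0) else ν (x l)) *
          F k x c with hHdef
      have hfac : ∀ (u : W) (a : Fin m → A),
          (∑ D : Fin n → W,
            (∏ i, if i = j then (if D i = u then (1:ℝ) else 0) else ν (D i)) *
              ∏ k, F k (fun l => D (e f k l)) (a k))
          = ∏ k, H u k (a k) :=
        fun u a => aux_block_factor nk hsum ν F j u (e f) hinjk f hvalk a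
      -- find l₀ with e f (f j) l₀ = j
      have hfP : ∀ k, (Finset.univ.filter fun i => f i = k).card = nk k := by
        have := hf
        simp only [hPdef, partitions, Finset.mem_filter, Finset.mem_univ, true_and] at this
        exact this
      obtain ⟨l₀, hl₀⟩ : ∃ l₀, e f (f j) l₀ = j := by
        have himg : Finset.image (e f (f j)) Finset.univ
            ⊆ Finset.univ.filter fun i => f i = f j := by
          intro i hi
          simp only [Finset.mem_image, Finset.mem_univ, true_and] at hi
          obtain ⟨l, rfl⟩ := hi
          simp [hvalk]
        have hcardimg : (Finset.image (e f (f j)) Finset.univ).card = nk (f j) := by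
          rw [Finset.card_image_of_injective _ (hinjk _), Finset.card_univ,
            Fintype.card_fin]
        have heqset : Finset.image (e f (f j)) Finset.univ
            = Finset.univ.filter fun i => f i = f j :=
          Finset.eq_of_subset_of_card_le himg (by rw [hfP, hcardimg])
        have hj : j ∈ Finset.image (e f (f j)) Finset.univ := by
          rw [heqset]; simp
        simpa using hj
      have hiff : ∀ l, (e f (f j) l = j) ↔ (l = l₀) :=
        fun l => ⟨fun h => hinjk (f j) (h.trans hl₀.symm), fun h => h ▸ hl₀⟩
      have hHk0 : ∀ u, H u (f j) = pushKer (iidFix (hpos (f j)) ν u) (F (f j)) := by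
        intro u
        funext c
        rw [hHdef]
        simp only
        rw [← aux_fixed_block (hpos (f j)) ν u (F (f j)) (hsym (f j)) l₀ c]
        exact Finset.sum_congr rfl fun x _ => by
          rw [Finset.prod_congr rfl fun l _ => if_congr (hiff l) rfl rfl]
      have hHother : ∀ k, k ≠ f j → ∀ u c,
          H u k c = ∑ x : Fin (nk k) → W, (∏ l, ν (x l)) * F k x c := by
        intro k hk u c
        rw [hHdef]
        simp only
        refine Finset.sum_congr rfl fun x _ => ?_
        congr 1
        refine Finset.prod_congr rfl fun l _ => ?_
        rw [if_neg]
        intro h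
        exact hk (by rw [← hvalk k l, h])
      have heqvw : ∀ k, k ≠ f j → H v k = H w k := by
        intro k hk
        funext c
        rw [hHother k hk v c, hHother k hk w c]
      have hpmfother : ∀ k, k ≠ f j → IsPMF (H v k) := by
        intro k hk
        constructor
        · intro c
          rw [hHother k hk v c]
          exact Finset.sum_nonneg fun x _ => mul_nonneg
            (Finset.prod_nonneg fun l _ => hν.1 _) ((hF k x).1 c)
        · rw [show (∑ c, H v k c) = ∑ c, ∑ x : Fin (nk k) → W, (∏ l, ν (x l)) * F k x c
            from Finset.sum_congr rfl fun c _ => hHother k hk v c]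
          rw [Finset.sum_comm]
          have : ∀ x : Fin (nk k) → W,
              ∑ c, (∏ l, ν (x l)) * F k x c = ∏ l, ν (x l) := by
            intro x
            rw [← Finset.mul_sum, (hF k x).2, mul_one]
          rw [Finset.sum_congr rfl fun x _ => this x]
          rw [← Fintype.piFinset_univ, ← Finset.prod_univ_sum]
          simp [hν.2]
      have hbound := aux_prod_privacy_bound (f j) (H v) (H w) heqvw hpmfother ε S
      rw [hHk0 v, hHk0 w] at hbound
      calc (∑ a ∈ S, ∑ D : Fin n → W,
            (∏ i, if i = j then (if D i = v then (1:ℝ) else 0) else ν (D i)) *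
              ∏ k, F k (fun l => D (e f k l)) (a k))
          = ∑ a ∈ S, ∏ k, H v k (a k) := Finset.sum_congr rfl fun a _ => hfac v a
        _ ≤ Real.exp ε * ∑ a ∈ S, ∏ k, H w k (a k)
              + hsDiv ε (pushKer (iidFix (hpos (f j)) ν v) (F (f j)))
                       (pushKer (iidFix (hpos (f j)) ν w) (F (f j))) := hbound
        _ ≤ Real.exp ε * ∑ a ∈ S, ∏ k, H w k (a k) + Δ (f j) := by
            have := hΔle (f j) v w
            nlinarith [this]
        _ = Real.exp ε * (∑ a ∈ S, ∑ D : Fin n → W,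
              (∏ i, if i = j then (if D i = w then (1:ℝ) else 0) else ν (D i)) *
                ∏ k, F k (fun l => D (e f k l)) (a k)) + Δ (f j) := by
            rw [Finset.sum_congr rfl fun a _ => (hfac w a).symm]
    -- assemble
    have lhs_eq : ∀ u : W,
        (∑ a ∈ S, ((P.card : ℝ)⁻¹ * ∑ f ∈ P, ∑ D : Fin n → W,
          (∏ i, if i = j then (if D i = u then (1:ℝ) else 0) else ν (D i)) *
            ∏ k, F k (fun l => D (e f k l)) (a k)))
        = (P.card : ℝ)⁻¹ * ∑ f ∈ P, ∑ a ∈ S, ∑ D : Fin n → W,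
          (∏ i, if i = j then (if D i = u then (1:ℝ) else 0) else ν (D i)) *
            ∏ k, F k (fun l => D (e f k l)) (a k) := by
      intro u
      rw [← Finset.mul_sum, Finset.sum_comm]
    rw [lhs_eq v, lhs_eq w]
    have hdelta : (P.card : ℝ)⁻¹ * ∑ f ∈ P, Δ (f j) = ∑ k, ((nk k : ℝ) / n) * Δ k := by
      have hsplit : ∑ f ∈ P, Δ (f j)
          = ∑ k : Fin m, ∑ f ∈ P.filter (fun f => f j = k), Δ (f j) :=
        (Finset.sum_fiberwise P (fun f => f j) (fun f => Δ (f j))).symm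
      have hfib : ∀ k : Fin m, ∑ f ∈ P.filter (fun f => f j = k), Δ (f j)
          = ((P.filter fun f => f j = k).card : ℝ) * Δ k := by
        intro k
        rw [Finset.sum_congr rfl fun f hf => by
          rw [(Finset.mem_filter.1 hf).2]]
        rw [Finset.sum_const, nsmul_eq_mul]
      rw [hsplit, Finset.sum_congr rfl fun k _ => hfib k, Finset.mul_sum]
      refine Finset.sum_congr rfl fun k _ => ?_
      have hcount : (nk k : ℝ) * P.card
          = n * ((P.filter fun f => f j = k).card : ℝ) := by
        exact_mod_cast congrArg (Nat.cast : ℕ → ℝ) (aux_count_mul j k)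
      have hn' : (0:ℝ) < n := by exact_mod_cast hn
      field_simp
      linear_combination (-(Δ k)) * hcount
    calc (P.card : ℝ)⁻¹ * ∑ f ∈ P, ∑ a ∈ S, ∑ D : Fin n → W,
          (∏ i, if i = j then (if D i = v then (1:ℝ) else 0) else ν (D i)) *
            ∏ k, F k (fun l => D (e f k l)) (a k)
        ≤ (P.card : ℝ)⁻¹ * ∑ f ∈ P,
            (Real.exp ε * (∑ a ∈ S, ∑ D : Fin n → W,
              (∏ i, if i = j then (if D i = w then (1:ℝ) else 0) else ν (D i)) *
                ∏ k, F k (fun l => D (e f k l)) (a k)) + Δ (f j)) :=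
          mul_le_mul_of_nonneg_left (Finset.sum_le_sum per_f) (by positivity)
      _ = Real.exp ε * ((P.card : ℝ)⁻¹ * ∑ f ∈ P, ∑ a ∈ S, ∑ D : Fin n → W,
              (∏ i, if i = j then (if D i = w then (1:ℝ) else 0) else ν (D i)) *
                ∏ k, F k (fun l => D (e f k l)) (a k))
            + (P.card : ℝ)⁻¹ * ∑ f ∈ P, Δ (f j) := by
          rw [Finset.sum_add_distrib, ← Finset.mul_sum, mul_add]
          ring
      _ = Real.exp ε * ((P.card : ℝ)⁻¹ * ∑ f ∈ P, ∑ a ∈ S, ∑ D : Fin n → W,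
              (∏ i, if i = j then (if D i = w then (1:ℝ) else 0) else ν (D i)) *
                ∏ k, F k (fun l => D (e f k l)) (a k))
            + ∑ k, ((nk k : ℝ) / n) * Δ k := by rw [hdelta]
end

section
/- Adaptive composition bound (fixed template, two rounds): let μ be a product distribution on W^n, τ an injective template with two disjoint blocks, the critical index j in block 2, and let F₁ act on block 1 and F₂(a₁) on block 2 adaptively depending on the first answer a₁. Then for all v, w and ε ≥ 0: D_ε(joint output under μ_{j,v}, joint output under μ_{j,w}) ≤ ∑_{a₁∈A} (μ K_{τ¹} K_{F₁})(a₁) · D_ε(μ_{j,v} K_{τ²} K_{F₂(a₁)}, μ_{j,w} K_{τ²} K_{F₂(a₁)}). -/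
open Finset Function

section aux
set_option linter.unusedSectionVars false
variable {W : Type*} [Fintype W] [DecidableEq W] {n : ℕ}

lemma sum_prod_pi (ν : Fin n → W → ℝ) :
    ∑ D : Fin n → W, ∏ i, ν i (D i) = ∏ i, ∑ x, ν i x := by
  rw [Finset.prod_univ_sum, Fintype.piFinset_univ]

lemma sum_weight (j : Fin n) (κ κ' : W → ℝ)
    (hκ : ∑ x, κ x = 1) (hκ' : ∑ x, κ' x = 1) (F : (Fin n → W) → ℝ)
    (hF : ∀ D x, F (Function.update D j x) = F D) :
    ∑ D : Fin n → W, κ (D j) * F D = ∑ D : Fin n → W, κ' (D j) * F D := by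
  have inv : Function.Involutive
      (fun p : (Fin n → W) × W => (Function.update p.1 j p.2, p.1 j)) := by
    rintro ⟨D, x⟩
    simp [Function.update_idem]
  calc ∑ D : Fin n → W, κ (D j) * F D
      = (∑ D : Fin n → W, κ (D j) * F D) * ∑ x, κ' x := by rw [hκ', mul_one]
    _ = ∑ p : (Fin n → W) × W, κ (p.1 j) * F p.1 * κ' p.2 := by
        rw [Finset.sum_mul_sum, Fintype.sum_prod_type]
    _ = ∑ p : (Fin n → W) × W, κ p.2 * F p.1 * κ' (p.1 j) := by
        rw [← Equiv.sum_comp inv.toPerm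
          (fun p : (Fin n → W) × W => κ (p.1 j) * F p.1 * κ' p.2)]
        refine Finset.sum_congr rfl fun p _ => ?_
        simp [Function.Involutive.coe_toPerm, hF]
    _ = ∑ D : Fin n → W, κ' (D j) * F D := by
        rw [Fintype.sum_prod_type]
        refine Finset.sum_congr rfl fun D _ => ?_
        dsimp only
        rw [← Finset.sum_mul, ← Finset.sum_mul, hκ]
        ring

lemma marg (ν μ' : Fin n → W → ℝ) (j : Fin n)
    (hse : ∀ i, i ≠ j → ν i = μ' i)
    (hν : ∑ x, ν j x = 1) (hμ : ∑ x, μ' j x = 1)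
    (f : (Fin n → W) → ℝ) (hf : ∀ D x, f (Function.update D j x) = f D) :
    ∑ D : Fin n → W, (∏ i, ν i (D i)) * f D
      = ∑ D : Fin n → W, (∏ i, μ' i (D i)) * f D := by
  have h1 : ∀ (κ : Fin n → W → ℝ) (D : Fin n → W),
      (∏ i, κ i (D i)) * f D
        = κ j (D j) * ((∏ i ∈ univ.erase j, κ i (D i)) * f D) := by
    intro κ D
    rw [← Finset.mul_prod_erase univ _ (Finset.mem_univ j)]
    ring
  simp_rw [h1]
  have heq : ∀ D : Fin n → W, (∏ i ∈ univ.erase j, ν i (D i))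
      = ∏ i ∈ univ.erase j, μ' i (D i) := fun D =>
    Finset.prod_congr rfl fun i hi => by rw [hse i (Finset.ne_of_mem_erase hi)]
  simp_rw [heq]
  exact sum_weight j (ν j) (μ' j) hν hμ _ (by
    intro D x
    rw [hf]
    congr 1
    exact Finset.prod_congr rfl fun i hi => by
      rw [Function.update_of_ne (Finset.ne_of_mem_erase hi)])

lemma factorize (ν : Fin n → W → ℝ) (hν : ∀ i, ∑ x, ν i x = 1)
    (S : Finset (Fin n)) (f g : (Fin n → W) → ℝ)
    (hf : ∀ D D' : Fin n → W, (∀ i ∈ S, D i = D' i) → f D = f D')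
    (hg : ∀ D D' : Fin n → W, (∀ i ∉ S, D i = D' i) → g D = g D') :
    (∑ D : Fin n → W, (∏ i, ν i (D i)) * f D) * (∑ D : Fin n → W, (∏ i, ν i (D i)) * g D)
      = ∑ D : Fin n → W, (∏ i, ν i (D i)) * (f D * g D) := by
  set h : (Fin n → W) → (Fin n → W) → (Fin n → W) :=
    fun D D' i => if i ∈ S then D i else D' i with hh
  have inv : Function.Involutive
      (fun p : (Fin n → W) × (Fin n → W) => (h p.1 p.2, h p.2 p.1)) := by
    rintro ⟨D, D'⟩
    refine Prod.ext ?_ ?_ <;> funext i <;> by_cases hi : i ∈ S <;> simp [hh, hi]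
  calc (∑ D : Fin n → W, (∏ i, ν i (D i)) * f D) * (∑ D : Fin n → W, (∏ i, ν i (D i)) * g D)
      = ∑ p : (Fin n → W) × (Fin n → W),
          (∏ i, ν i (p.1 i)) * f p.1 * ((∏ i, ν i (p.2 i)) * g p.2) := by
        rw [Finset.sum_mul_sum, Fintype.sum_prod_type]
    _ = ∑ p : (Fin n → W) × (Fin n → W),
          (∏ i, ν i (h p.1 p.2 i)) * f (h p.1 p.2) * ((∏ i, ν i (h p.2 p.1 i)) * g (h p.2 p.1)) := by
        rw [← Equiv.sum_comp inv.toPerm (fun p : (Fin n → W) × (Fin n → W) =>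
          (∏ i, ν i (p.1 i)) * f p.1 * ((∏ i, ν i (p.2 i)) * g p.2))]
        rfl
    _ = ∑ p : (Fin n → W) × (Fin n → W),
          ((∏ i, ν i (p.1 i)) * (f p.1 * g p.1)) * (∏ i, ν i (p.2 i)) := by
        refine Finset.sum_congr rfl fun ⟨D, D'⟩ _ => ?_
        have hfe : f (h D D') = f D := hf _ _ fun i hi => by simp [hh, hi]
        have hge : g (h D' D) = g D := hg (h D' D) D fun i hi => by simp [hh, hi]
        have hpe : (∏ i, ν i (h D D' i)) * (∏ i, ν i (h D' D i))
            = (∏ i, ν i (D i)) * (∏ i, ν i (D' i)) := by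
          rw [← Finset.prod_mul_distrib, ← Finset.prod_mul_distrib]
          exact Finset.prod_congr rfl fun i _ => by
            by_cases hi : i ∈ S <;> simp [hh, hi, mul_comm]
        dsimp only
        rw [hfe, hge]
        calc (∏ i, ν i (h D D' i)) * f D * ((∏ i, ν i (h D' D i)) * g D)
            = ((∏ i, ν i (h D D' i)) * (∏ i, ν i (h D' D i))) * (f D * g D) := by ring
          _ = _ := by rw [hpe]; ring
    _ = ∑ D : Fin n → W, (∏ i, ν i (D i)) * (f D * g D) := by
        rw [Fintype.sum_prod_type]
        refine Finset.sum_congr rfl fun D _ => ?_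
        dsimp only
        rw [← Finset.mul_sum, sum_prod_pi]
        simp [hν]
end aux

theorem adaptive_two_round_fixed_template_bound
    {W A : Type*} [Fintype W] [DecidableEq W] [Fintype A]
    {n : ℕ}
    (μi : Fin n → W → ℝ) (hμi : ∀ i, IsPMF (μi i))
    (τ₁ τ₂ : Finset (Fin n)) (hdisj : Disjoint τ₁ τ₂)
    (j : Fin n) (hj : j ∈ τ₂)
    (G₁ : (Fin n → W) → A → ℝ) (hG₁ : ∀ D, IsPMF (G₁ D))
    (hdep₁ : ∀ (D D' : Fin n → W), (∀ i ∈ τ₁, D i = D' i) → G₁ D = G₁ D')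
    (G₂ : A → (Fin n → W) → A → ℝ) (hG₂ : ∀ a₁ D, IsPMF (G₂ a₁ D))
    (hdep₂ : ∀ (a₁ : A) (D D' : Fin n → W), (∀ i ∈ τ₂, D i = D' i) → G₂ a₁ D = G₂ a₁ D')
    (v w : W) (ε : ℝ) (hε : 0 ≤ ε) :
    hsDiv ε
      (fun p : A × A => ∑ D : Fin n → W, condProd μi j v D * (G₁ D p.1 * G₂ p.1 D p.2))
      (fun p : A × A => ∑ D : Fin n → W, condProd μi j w D * (G₁ D p.1 * G₂ p.1 D p.2))
      ≤ ∑ a₁ : A, pushKer (fun D : Fin n → W => ∏ i, μi i (D i)) G₁ a₁ *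
          hsDiv ε (pushKer (condProd μi j v) (G₂ a₁)) (pushKer (condProd μi j w) (G₂ a₁)) := by
  
  classical
  have hj1 : j ∉ τ₁ := fun h => Finset.disjoint_left.mp hdisj h hj
  set ν : W → Fin n → W → ℝ :=
    fun u i x => if i = j then (if x = u then 1 else 0) else μi i x with hν
  have hcond : ∀ (u : W) (D : Fin n → W), condProd μi j u D = ∏ i, ν u i (D i) := by
    intro u D
    unfold condProd
    exact Finset.prod_congr rfl fun i _ => by by_cases hi : i = j <;> simp [hν, hi]
  have hsum1 : ∀ (u : W) (i : Fin n), ∑ x, ν u i x = 1 := by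
    intro u i
    by_cases hi : i = j
    · simp [hν, hi]
    · simp [hν, hi, (hμi i).2]
  have hpush : ∀ (u : W) (a₁ a₂ : A),
      pushKer (condProd μi j u) (G₂ a₁) a₂
        = ∑ D : Fin n → W, (∏ i, ν u i (D i)) * G₂ a₁ D a₂ :=
    fun u a₁ a₂ => Finset.sum_congr rfl fun D _ => by rw [hcond u]
  have hfact : ∀ (u : W) (a₁ a₂ : A),
      (∑ D : Fin n → W, condProd μi j u D * (G₁ D a₁ * G₂ a₁ D a₂))
        = pushKer (fun D : Fin n → W => ∏ i, μi i (D i)) G₁ a₁ *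
            pushKer (condProd μi j u) (G₂ a₁) a₂ := by
    intro u a₁ a₂
    simp_rw [hcond u]
    rw [← factorize (ν u) (hsum1 u) τ₁ (fun D => G₁ D a₁) (fun D => G₂ a₁ D a₂)
      (fun D D' hDD => congrFun (hdep₁ D D' hDD) a₁)
      (fun D D' hDD => congrFun
        (hdep₂ a₁ D D' fun i hi => hDD i (Finset.disjoint_right.mp hdisj hi)) a₂)]
    rw [hpush u a₁ a₂]
    congr 1
    rw [marg (ν u) μi j (fun i hij => by funext x; simp [hν, hij]) (hsum1 u j) (hμi j).2
      (fun D => G₁ D a₁) (fun D x => congrFun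
        (hdep₁ (Function.update D j x) D fun i hi =>
          Function.update_of_ne (by rintro rfl; exact hj1 hi) _ _) a₁)]
    rfl
  have hg0 : ∀ a₁, 0 ≤ pushKer (fun D : Fin n → W => ∏ i, μi i (D i)) G₁ a₁ := by
    intro a₁
    apply Finset.sum_nonneg
    intro D _
    exact mul_nonneg (Finset.prod_nonneg fun i _ => (hμi i).1 _) ((hG₁ D).1 _)
  unfold hsDiv
  simp_rw [hfact v, hfact w]
  rw [Fintype.sum_prod_type]
  apply le_of_eq
  refine Finset.sum_congr rfl fun a₁ _ => ?_
  rw [Finset.mul_sum]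
  refine Finset.sum_congr rfl fun a₂ _ => ?_
  rw [mul_max_of_nonneg _ _ (hg0 a₁), mul_zero]
  congr 1
  ring
end
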